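/- Let l ≥ 1 be an integer and G a finite r-uniform hypergraph. Then τ^{(r-1)}(G) ≤ |D(G)| · [1/l + (1 - 1/l)^{r-1}]. -/

import Mathlib

set_option linter.unusedSectionVars false


variable {V : Type*} [DecidableEq V]

/-- `M` is an `m`-matching of `G`: a set of edges pairwise intersecting in fewer
than `m` vertices. -/
def IsMMatching (G : Finset (Finset V)) (m : ℕ) (M : Finset (Finset V)) : Prop :=
  M ⊆ G ∧ ∀ e ∈ M, ∀ f ∈ M, e ≠ f → (e ∩ f).card < m

/-- `C` is an `m`-cover of `G`: a family of `m`-element vertex sets such that every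
edge of `G` contains a member of `C`. -/
def IsMCover (G : Finset (Finset V)) (m : ℕ) (C : Finset (Finset V)) : Prop :=
  (∀ s ∈ C, s.card = m) ∧ ∀ e ∈ G, ∃ s ∈ C, s ⊆ e

/-- The `m`-matching number `ν^{(m)}(G)`. -/
noncomputable def nuM (G : Finset (Finset V)) (m : ℕ) : ℕ :=
  sSup {k | ∃ M, IsMMatching G m M ∧ M.card = k}

/-- The `m`-covering number `τ^{(m)}(G)`. -/
noncomputable def tauM (G : Finset (Finset V)) (m : ℕ) : ℕ :=
  sInf {k | ∃ C, IsMCover G m C ∧ C.card = k}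

/-- `D(G)` (with parameter `m`): the `m`-element vertex subsets contained in at
least one edge of `G`. -/
def Dset (G : Finset (Finset V)) (m : ℕ) : Finset (Finset V) :=
  G.biUnion fun e => e.powersetCard m

def wgt (l : ℕ) (f : V → Fin l) (σ : Finset V) : ZMod l :=
  ∑ v ∈ σ, ((f v : ℕ) : ZMod l)

def dd (l : ℕ) (f : V → Fin l) (σ : Finset V) : ℕ :=
  (Finset.univ.filter fun i : Fin l => ∀ v ∈ σ, f v ≠ i).card

lemma dd_lt (l : ℕ) (f : V → Fin l) (σ : Finset V) (hσ : σ.Nonempty) :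
    dd l f σ < l := by
  obtain ⟨v, hv⟩ := hσ
  have hsub : (Finset.univ.filter fun i : Fin l => ∀ v ∈ σ, f v ≠ i) ⊆
      Finset.univ.erase (f v) := by
    intro i hi
    simp only [Finset.mem_filter] at hi
    exact Finset.mem_erase.2 ⟨fun h => hi.2 v hv h.symm, Finset.mem_univ _⟩
  calc dd l f σ ≤ (Finset.univ.erase (f v)).card := Finset.card_le_card hsub
    _ < Finset.univ.card := Finset.card_erase_lt_of_mem (Finset.mem_univ _)
    _ = l := by simp

lemma count_j (l : ℕ) [NeZero l] (x : ZMod l) (d : ℕ) (hd : d < l) :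
    (Finset.univ.filter fun j : ZMod l => (x + j).val ≤ d).card = d + 1 := by
  rw [show d + 1 = (Finset.range (d + 1)).card from (Finset.card_range _).symm]
  apply Finset.card_bij (fun j _ => (x + j).val)
  · intro j hj
    simp only [Finset.mem_filter] at hj
    simpa [Finset.mem_range] using Nat.lt_succ_of_le hj.2
  · intro a _ b _ hab
    have : x + a = x + b := ZMod.val_injective _ hab
    exact add_left_cancel this
  · intro t ht
    have ht' : t < d + 1 := Finset.mem_range.1 ht
    refine ⟨(t : ZMod l) - x, ?_, ?_⟩
    · simp only [Finset.mem_filter]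
      refine ⟨Finset.mem_univ _, ?_⟩
      rw [add_sub_cancel, ZMod.val_cast_of_lt (by omega)]
      omega
    · rw [add_sub_cancel, ZMod.val_cast_of_lt (by omega)]

lemma cover_lemma (l : ℕ) [NeZero l] (f : V → Fin l) (j : ZMod l)
    (e : Finset V) (he : e.Nonempty) :
    ∃ v ∈ e, (wgt l f (e.erase v) + j).val ≤ dd l f (e.erase v) := by
  classical
  have hl : 1 ≤ l := Nat.one_le_iff_ne_zero.2 (NeZero.ne l)
  set k := (e.image f).card with hk
  have hk1 : 1 ≤ k := Finset.card_pos.2 (he.image f)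
  have hkl : k ≤ l := by
    calc k ≤ (Finset.univ : Finset (Fin l)).card := Finset.card_le_card (Finset.subset_univ _)
      _ = l := by simp
  set s : ZMod l := wgt l f e + j with hs
  set T : Finset (ZMod l) := (Finset.range (l - k + 1)).image (fun t : ℕ => s - ((t : ℕ) : ZMod l)) with hT
  have hTcard : T.card = l - k + 1 := by
    rw [hT, Finset.card_image_of_injOn, Finset.card_range]
    intro a ha b hb hab
    have h1 : (a : ZMod l) = b := by
      have := sub_right_injective hab
      exact this
    have ha' : a < l := by simp only [Finset.mem_coe, Finset.mem_range] at ha; omega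
    have hb' : b < l := by simp only [Finset.mem_coe, Finset.mem_range] at hb; omega
    rw [← ZMod.val_cast_of_lt ha', ← ZMod.val_cast_of_lt hb', h1]
  set S : Finset (ZMod l) := (e.image f).image (fun c : Fin l => ((c : ℕ) : ZMod l)) with hS
  have hScard : S.card = k := by
    rw [hS, Finset.card_image_of_injOn]
    intro a _ b _ hab
    have hab' : ((a : ℕ) : ZMod l) = ((b : ℕ) : ZMod l) := hab
    have : (a : ℕ) = (b : ℕ) := by
      rw [← ZMod.val_cast_of_lt a.isLt, ← ZMod.val_cast_of_lt b.isLt, hab']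
    exact Fin.ext this
  have hinter : (S ∩ T).Nonempty := by
    rw [← Finset.card_pos]
    have h1 := Finset.card_inter_add_card_union S T
    have h2 : (S ∪ T).card ≤ l := by
      calc (S ∪ T).card ≤ (Finset.univ : Finset (ZMod l)).card :=
            Finset.card_le_card (Finset.subset_univ _)
        _ = l := by simp [ZMod.card]
    omega
  obtain ⟨x, hx⟩ := hinter
  rw [Finset.mem_inter] at hx
  obtain ⟨hxS, hxT⟩ := hx
  rw [hS, Finset.mem_image] at hxS
  obtain ⟨c, hc, hcx⟩ := hxS
  rw [Finset.mem_image] at hc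
  obtain ⟨v, hv, hfv⟩ := hc
  rw [hT, Finset.mem_image] at hxT
  obtain ⟨t, ht, htx⟩ := hxT
  rw [Finset.mem_range] at ht
  refine ⟨v, hv, ?_⟩
  have hw : wgt l f (e.erase v) + ((f v : ℕ) : ZMod l) = wgt l f e := by
    rw [wgt, wgt, Finset.sum_erase_add _ _ hv]
  have hwj : wgt l f (e.erase v) + j = (t : ZMod l) := by
    have : wgt l f (e.erase v) = wgt l f e - ((f v : ℕ) : ZMod l) := by
      rw [← hw]; ring
    rw [this, hfv, hcx, ← htx]
    ring_nf
    rw [hs]; ring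
  rw [hwj, ZMod.val_cast_of_lt (by omega)]
  -- t ≤ l - k ≤ dd l f (e.erase v)
  have hdd : l - k ≤ dd l f (e.erase v) := by
    have hemiss : (Finset.univ.filter fun i : Fin l => ∀ u ∈ e, f u ≠ i) =
        Finset.univ \ e.image f := by
      ext i
      simp [Finset.mem_filter, Finset.mem_sdiff, Finset.mem_image]
    have hcard : (Finset.univ.filter fun i : Fin l => ∀ u ∈ e, f u ≠ i).card = l - k := by
      rw [hemiss, Finset.card_sdiff_of_subset (Finset.subset_univ _)]
      simp [hk]
    rw [← hcard]
    apply Finset.card_le_card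
    intro i hi
    simp only [Finset.mem_filter] at hi ⊢
    exact ⟨hi.1, fun u hu => hi.2 u (Finset.mem_of_mem_erase hu)⟩
  omega

def ext' (l : ℕ) (hl : 1 ≤ l) (U : Finset V) (χ : {x // x ∈ U} → Fin l) : V → Fin l :=
  fun v => if h : v ∈ U then χ ⟨v, h⟩ else ⟨0, hl⟩

lemma card_filter_coe (U σ : Finset V) (hσU : σ ⊆ U) :
    (Finset.univ.filter fun v : {x // x ∈ U} => ↑v ∈ σ).card = σ.card := by
  refine Finset.card_bij (fun (v : {x // x ∈ U}) _ => (v : V)) ?_ ?_ ?_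
  · intro v hv; exact (Finset.mem_filter.1 hv).2
  · intro a _ b _ hab; exact Subtype.ext hab
  · intro w hw
    exact ⟨⟨w, hσU hw⟩, Finset.mem_filter.2 ⟨Finset.mem_univ _, hw⟩, rfl⟩

lemma count_chi (l : ℕ) (hl : 1 ≤ l) (U σ : Finset V) (hσU : σ ⊆ U) (i : Fin l) :
    (Finset.univ.filter fun χ : {x // x ∈ U} → Fin l =>
        ∀ v ∈ σ, ext' l hl U χ v ≠ i).card
      = (l - 1) ^ σ.card * l ^ (U.card - σ.card) := by
  classical
  have hiff : ∀ χ : {x // x ∈ U} → Fin l,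
      (∀ v ∈ σ, ext' l hl U χ v ≠ i) ↔ (∀ u : {x // x ∈ U}, (↑u ∈ σ → χ u ≠ i)) := by
    intro χ
    constructor
    · intro h u hu
      have := h u (by exact hu)
      simpa [ext', u.2] using this
    · intro h v hv
      have : ext' l hl U χ v = χ ⟨v, hσU hv⟩ := by simp [ext', hσU hv]
      rw [this]
      exact h ⟨v, hσU hv⟩ hv
  rw [Finset.filter_congr (fun χ _ => by rw [hiff])]
  rw [← Fintype.card_subtype]
  rw [Fintype.card_congr (Equiv.subtypePiEquivPi (p := fun (u : {x // x ∈ U}) (c : Fin l) => ↑u ∈ σ → c ≠ i))]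
  rw [Fintype.card_pi]
  have hfac : ∀ u : {x // x ∈ U},
      Fintype.card {c : Fin l // ↑u ∈ σ → c ≠ i} = if (↑u : V) ∈ σ then l - 1 else l := by
    intro u
    split_ifs with h
    · rw [Fintype.card_congr (Equiv.subtypeEquivRight (q := fun c : Fin l => ¬(c = i))
        (fun c => by simp [h]))]
      rw [Fintype.card_subtype_compl, Fintype.card_subtype_eq, Fintype.card_fin]
    · rw [Fintype.card_congr (Equiv.subtypeUnivEquiv (fun c hmem => absurd hmem h))]
      exact Fintype.card_fin l
  rw [Finset.prod_congr rfl (fun u _ => hfac u)]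
  rw [Finset.prod_ite (fun _ => l - 1) (fun _ => l), Finset.prod_const, Finset.prod_const,
    card_filter_coe U σ hσU]
  have h1 := Finset.card_filter_add_card_filter_not
    (s := (Finset.univ : Finset {x // x ∈ U})) (p := fun v => ↑v ∈ σ)
  rw [card_filter_coe U σ hσU] at h1
  have h2 : (Finset.univ : Finset {x // x ∈ U}).card = U.card := by
    rw [Finset.card_univ, Fintype.card_coe]
  have h3 : σ.card ≤ U.card := Finset.card_le_card hσU
  have h4 : (Finset.univ.filter (fun v : {x // x ∈ U} => ¬ ↑v ∈ σ)).card
      = U.card - σ.card := by omega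
  rw [h4]

lemma sum_dd (l : ℕ) (hl : 1 ≤ l) (U σ : Finset V) (hσU : σ ⊆ U) :
    ∑ χ : {x // x ∈ U} → Fin l, dd l (ext' l hl U χ) σ
      = l * ((l - 1) ^ σ.card * l ^ (U.card - σ.card)) := by
  classical
  have h1 : ∀ χ : {x // x ∈ U} → Fin l, dd l (ext' l hl U χ) σ =
      ∑ i : Fin l, if (∀ v ∈ σ, ext' l hl U χ v ≠ i) then 1 else 0 := by
    intro χ; rw [dd, Finset.card_filter]
  simp_rw [h1]
  rw [Finset.sum_comm]
  have h2 : ∀ i : Fin l, (∑ χ : {x // x ∈ U} → Fin l,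
      if (∀ v ∈ σ, ext' l hl U χ v ≠ i) then 1 else 0)
        = (l - 1) ^ σ.card * l ^ (U.card - σ.card) := by
    intro i
    rw [← Finset.card_filter]
    exact count_chi l hl U σ hσU i
  simp_rw [h2]
  rw [Finset.sum_const, Finset.card_univ, Fintype.card_fin, smul_eq_mul]

theorem stmt6 (r l : ℕ) (hl : 1 ≤ l) (G : Finset (Finset V))
    (hG : ∀ e ∈ G, e.card = r) :
    (tauM G (r - 1) : ℝ) ≤
      ((Dset G (r - 1)).card : ℝ) * (1 / l + (1 - 1 / (l : ℝ)) ^ (r - 1)) := by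
  classical
  haveI : NeZero l := ⟨by omega⟩
  have hL0 : (0:ℝ) < (l:ℝ) := by exact_mod_cast Nat.lt_of_lt_of_le Nat.zero_lt_one hl
  have hLne : (l:ℝ) ≠ 0 := ne_of_gt hL0
  by_cases hG0 : G = ∅
  · subst hG0
    have ht : tauM (∅ : Finset (Finset V)) (r-1) = 0 := by
      have h0 : (0 : ℕ) ∈ {k | ∃ C, IsMCover (∅ : Finset (Finset V)) (r-1) C ∧ C.card = k} :=
        ⟨∅, ⟨fun s hs => absurd hs (Finset.notMem_empty s),
          fun e he => absurd he (Finset.notMem_empty e)⟩, rfl⟩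
      exact Nat.le_zero.1 (Nat.sInf_le h0)
    simp [ht, Dset]
  obtain ⟨e₀, he₀⟩ := Finset.nonempty_iff_ne_empty.2 hG0
  by_cases hr : r ≤ 1
  · -- r - 1 = 0 : cover by {∅}
    have hm : r - 1 = 0 := by omega
    rw [hm]
    have hcov : IsMCover G 0 ({∅} : Finset (Finset V)) := by
      constructor
      · intro s hs; rw [Finset.mem_singleton] at hs; simp [hs]
      · intro e _; exact ⟨∅, Finset.mem_singleton_self _, Finset.empty_subset e⟩
    have ht : tauM G 0 ≤ 1 :=
      Nat.sInf_le ⟨{∅}, hcov, Finset.card_singleton _⟩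
    have hD1 : 1 ≤ (Dset G 0).card := by
      apply Finset.card_pos.2
      exact ⟨∅, Finset.mem_biUnion.2 ⟨e₀, he₀,
        Finset.mem_powersetCard.2 ⟨Finset.empty_subset _, Finset.card_empty⟩⟩⟩
    have h1 : (tauM G 0 : ℝ) ≤ 1 := by exact_mod_cast ht
    have h2 : (1:ℝ) ≤ ((Dset G 0).card : ℝ) * (1 / l + (1 - 1 / (l:ℝ)) ^ 0) := by
      rw [pow_zero]
      have : (1:ℝ) ≤ ((Dset G 0).card : ℝ) := by exact_mod_cast hD1
      nlinarith [one_div_pos.2 hL0]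
    linarith
  -- main case : r ≥ 2
  push_neg at hr
  set m := r - 1 with hmdef
  have hm1 : 1 ≤ m := by omega
  set U : Finset V := G.biUnion id with hU
  have hUe : ∀ e ∈ G, e ⊆ U := by
    intro e he v hv
    exact Finset.mem_biUnion.2 ⟨e, he, hv⟩
  have hD : ∀ σ ∈ Dset G m, σ.card = m ∧ σ ⊆ U := by
    intro σ hσ
    rw [Dset, Finset.mem_biUnion] at hσ
    obtain ⟨e, he, hmem⟩ := hσ
    rw [Finset.mem_powersetCard] at hmem
    exact ⟨hmem.2, hmem.1.trans (hUe e he)⟩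
  have hmu : m ≤ U.card := by
    have h1 : e₀.card ≤ U.card := Finset.card_le_card (hUe e₀ he₀)
    have h2 : e₀.card = r := hG e₀ he₀
    omega
  set u := U.card with hu
  -- the cover families
  set F : ({x // x ∈ U} → Fin l) → V → Fin l := fun χ => ext' l hl U χ with hF
  set Cov : ({x // x ∈ U} → Fin l) → ZMod l → Finset (Finset V) := fun χ j =>
    (Dset G m).filter (fun σ => (wgt l (F χ) σ + j).val ≤ dd l (F χ) σ) with hCov
  -- Step A: each Cov χ j is a cover
  have hA : ∀ χ j, tauM G m ≤ (Cov χ j).card := by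
    intro χ j
    have hcov : IsMCover G m (Cov χ j) := by
      constructor
      · intro s hs
        exact (hD s (Finset.mem_filter.1 hs).1).1
      · intro e he
        have he' : e.card = r := hG e he
        have hne : e.Nonempty := Finset.card_pos.1 (by omega)
        obtain ⟨v, hv, hle⟩ := cover_lemma l (F χ) j e hne
        refine ⟨e.erase v, ?_, Finset.erase_subset _ _⟩
        rw [hCov, Finset.mem_filter]
        refine ⟨Finset.mem_biUnion.2 ⟨e, he, Finset.mem_powersetCard.2
          ⟨Finset.erase_subset _ _, by rw [Finset.card_erase_of_mem hv, he']⟩⟩, hle⟩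
    exact Nat.sInf_le ⟨Cov χ j, hcov, rfl⟩
  -- Step B: total count
  have hB : ∑ χ : {x // x ∈ U} → Fin l, ∑ j : ZMod l, (Cov χ j).card
      = (Dset G m).card * (l ^ u + l * ((l - 1) ^ m * l ^ (u - m))) := by
    have hstep1 : ∀ χ, ∑ j : ZMod l, (Cov χ j).card
        = ∑ σ ∈ Dset G m, (dd l (F χ) σ + 1) := by
      intro χ
      have h1 : ∀ j : ZMod l, (Cov χ j).card = ∑ σ ∈ Dset G m,
          if (wgt l (F χ) σ + j).val ≤ dd l (F χ) σ then 1 else 0 := by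
        intro j; rw [hCov, Finset.card_filter]
      simp_rw [h1]
      rw [Finset.sum_comm]
      apply Finset.sum_congr rfl
      intro σ hσ
      have hσne : σ.Nonempty := by
        rw [← Finset.card_pos, (hD σ hσ).1]; omega
      have hddlt : dd l (F χ) σ < l := dd_lt l (F χ) σ hσne
      rw [← Finset.card_filter]
      exact count_j l (wgt l (F χ) σ) (dd l (F χ) σ) hddlt
    simp_rw [hstep1]
    rw [Finset.sum_comm]
    have hstep2 : ∀ σ ∈ Dset G m, ∑ χ : {x // x ∈ U} → Fin l, (dd l (F χ) σ + 1)
        = l ^ u + l * ((l - 1) ^ m * l ^ (u - m)) := by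
      intro σ hσ
      rw [Finset.sum_add_distrib, Finset.sum_const, Finset.card_univ, smul_eq_mul, mul_one]
      have hcardfun : Fintype.card ({x // x ∈ U} → Fin l) = l ^ u := by
        rw [Fintype.card_fun, Fintype.card_fin, Fintype.card_coe]
      have hsdd : ∑ χ : {x // x ∈ U} → Fin l, dd l (F χ) σ
          = l * ((l - 1) ^ m * l ^ (u - m)) := by
        have := sum_dd l hl U σ (hD σ hσ).2
        rw [(hD σ hσ).1] at this
        exact this
      rw [hsdd, hcardfun]
      ring
    rw [Finset.sum_congr rfl hstep2, Finset.sum_const, smul_eq_mul]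
  -- Step C : lower bound for the total count
  have hC : l ^ u * (l * tauM G m) ≤ ∑ χ : {x // x ∈ U} → Fin l, ∑ j : ZMod l, (Cov χ j).card := by
    have h1 : ∀ χ, l * tauM G m ≤ ∑ j : ZMod l, (Cov χ j).card := by
      intro χ
      calc l * tauM G m = ∑ _j : ZMod l, tauM G m := by
            rw [Finset.sum_const, Finset.card_univ, ZMod.card, smul_eq_mul]
        _ ≤ ∑ j : ZMod l, (Cov χ j).card := Finset.sum_le_sum (fun j _ => hA χ j)
    calc l ^ u * (l * tauM G m) = ∑ _χ : {x // x ∈ U} → Fin l, l * tauM G m := by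
          rw [Finset.sum_const, Finset.card_univ, smul_eq_mul, Fintype.card_fun,
            Fintype.card_fin, Fintype.card_coe]
      _ ≤ _ := Finset.sum_le_sum (fun χ _ => h1 χ)
  rw [hB] at hC
  -- transfer to ℝ
  have hsub : ((l - 1 : ℕ) : ℝ) = (l:ℝ) - 1 := by
    rw [Nat.cast_sub hl]; norm_num
  have hcast : (l:ℝ) ^ u * ((l:ℝ) * (tauM G m : ℝ)) ≤
      ((Dset G m).card : ℝ) * ((l:ℝ) ^ u + (l:ℝ) * (((l - 1 : ℕ) : ℝ) ^ m * (l:ℝ) ^ (u - m))) := by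
    exact_mod_cast hC
  rw [hsub] at hcast
  have hpow : (l:ℝ) ^ m * (l:ℝ) ^ (u - m) = (l:ℝ) ^ u := by
    rw [← pow_add]; congr 1; omega
  have hkey : ((Dset G m).card : ℝ) * (1 / (l:ℝ) + (1 - 1 / (l:ℝ)) ^ m) * ((l:ℝ) ^ u * (l:ℝ))
      = ((Dset G m).card : ℝ) * ((l:ℝ) ^ u + (l:ℝ) * (((l:ℝ) - 1) ^ m * (l:ℝ) ^ (u - m))) := by
    have h1 : (1 : ℝ) - 1 / (l:ℝ) = ((l:ℝ) - 1) / (l:ℝ) := by field_simp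
    rw [h1, div_pow]
    field_simp
    rw [← hpow]
    ring
  have hfin : (tauM G m : ℝ) * ((l:ℝ) ^ u * (l:ℝ))
      ≤ ((Dset G m).card : ℝ) * (1 / (l:ℝ) + (1 - 1 / (l:ℝ)) ^ m) * ((l:ℝ) ^ u * (l:ℝ)) := by
    rw [hkey]
    calc (tauM G m : ℝ) * ((l:ℝ) ^ u * (l:ℝ)) = (l:ℝ) ^ u * ((l:ℝ) * (tauM G m : ℝ)) := by ring
      _ ≤ _ := hcast
  have hpos : (0:ℝ) < (l:ℝ) ^ u * (l:ℝ) := by positivity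
  exact le_of_mul_le_mul_right hfin hpos
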